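/- Let Γ be an infinite group and g ∈ Γ. If for every 3-cycle τ = (i,j,k) ∈ Alt(Γ) with i, j, k outside a fixed finite subset F of Γ we have g·τ = τ (where (g·τ)(x) = gτ(g⁻¹x)), then g = 1. -/

import Mathlib

open scoped Classical

/-- The set of 3-cycles of a type `X`, written as products of two transpositions. -/
def threeCycles (X : Type) : Set (Equiv.Perm X) :=
  {σ | ∃ a b c : X, a ≠ b ∧ a ≠ c ∧ b ≠ c ∧ σ = Equiv.swap a b * Equiv.swap a c}

/-- `Alt(X)`: the group of even finitary permutations of `X`, realized as the
subgroup of `Equiv.Perm X` generated by all 3-cycles. -/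
def altGroup (X : Type) : Subgroup (Equiv.Perm X) :=
  Subgroup.closure (threeCycles X)

lemma conj_threeCycles {X : Type} (π : Equiv.Perm X) :
    (MulAut.conj π).toMonoidHom '' threeCycles X ⊆ threeCycles X := by
  rintro _ ⟨σ, ⟨a, b, c, hab, hac, hbc, rfl⟩, rfl⟩
  refine ⟨π a, π b, π c, π.injective.ne hab, π.injective.ne hac, π.injective.ne hbc, ?_⟩
  simp only [MulEquiv.coe_toMonoidHom, MulAut.conj_apply]
  rw [Equiv.swap_apply_apply π a b, Equiv.swap_apply_apply π a c]
  group

lemma altGroup_map_conj_le {X : Type} (π : Equiv.Perm X) :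
    (altGroup X).map (MulAut.conj π).toMonoidHom ≤ altGroup X := by
  rw [altGroup, MonoidHom.map_closure]
  exact Subgroup.closure_mono (conj_threeCycles π)

lemma altGroup_map_conj {X : Type} (π : Equiv.Perm X) :
    (altGroup X).map (MulAut.conj π).toMonoidHom = altGroup X := by
  refine le_antisymm (altGroup_map_conj_le π) fun σ hσ => ?_
  refine ⟨(MulAut.conj π)⁻¹ σ, ?_, by simp; group⟩
  exact altGroup_map_conj_le π⁻¹ ⟨σ, hσ, by simp⟩

/-- Conjugation of `Alt(Γ)` by the left translation `x ↦ g x`. -/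
def altConjAut (Γ : Type) [Group Γ] (g : Γ) : MulAut (altGroup Γ) :=
  ((MulAut.conj (Equiv.mulLeft g : Equiv.Perm Γ)).subgroupMap (altGroup Γ)).trans
    (MulEquiv.subgroupCongr (altGroup_map_conj _))

/-- The action of `Γ` on `Alt(Γ)` given by `(g·σ)(x) = g σ (g⁻¹ x)`. -/
def altAction (Γ : Type) [Group Γ] : Γ →* MulAut (altGroup Γ) :=
  MonoidHom.mk' (fun g => altConjAut Γ g) (by
    intro g h
    refine MulEquiv.ext fun σ => Subtype.ext ?_
    show MulAut.conj (Equiv.mulLeft (g * h)) (σ : Equiv.Perm Γ) =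
      MulAut.conj (Equiv.mulLeft g) (MulAut.conj (Equiv.mulLeft h) (σ : Equiv.Perm Γ))
    rw [Equiv.mulLeft_mul, map_mul]
    rfl)

theorem eq_one_of_fixes_three_cycles (Γ : Type) [Group Γ] [Infinite Γ]
    (g : Γ) (F : Set Γ) (hF : F.Finite)
    (h : ∀ i j k : Γ, i ∉ F → j ∉ F → k ∉ F → i ≠ j → i ≠ k → j ≠ k →
      Equiv.mulLeft g * (Equiv.swap i j * Equiv.swap i k) * (Equiv.mulLeft g)⁻¹ =
        Equiv.swap i j * Equiv.swap i k) :
    g = 1 := by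
  by_contra hg
  obtain ⟨i, hi⟩ := hF.infinite_compl.nonempty
  obtain ⟨j, hj⟩ := (hF.union ((Set.finite_singleton (g*i)).insert i)).infinite_compl.nonempty
  obtain ⟨k, hk⟩ :=
    (hF.union (((Set.finite_singleton (g*i)).insert j).insert i)).infinite_compl.nonempty
  simp only [Set.compl_union, Set.mem_inter_iff, Set.mem_compl_iff, Set.mem_insert_iff,
    Set.mem_singleton_iff, not_or] at hi hj hk
  obtain ⟨hjF, hji, hjgi⟩ := hj
  obtain ⟨hkF, hki, hkj, hkgi⟩ := hk
  have hgi_i : g * i ≠ i := fun hc => hg (by rwa [mul_eq_right] at hc)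
  have heq := h i j k hi hjF hkF (Ne.symm hji) (Ne.symm hki) (Ne.symm hkj)
  have := congrArg (fun π : Equiv.Perm Γ => π (g * i)) heq
  simp only [Equiv.Perm.mul_apply, Equiv.Perm.inv_def, Equiv.mulLeft_symm,
    Equiv.coe_mulLeft, inv_mul_cancel_left] at this
  rw [Equiv.swap_apply_left, Equiv.swap_apply_of_ne_of_ne hki hkj,
    Equiv.swap_apply_of_ne_of_ne hgi_i (fun hc => hkgi hc.symm),
    Equiv.swap_apply_of_ne_of_ne hgi_i (fun hc => hjgi hc.symm)] at this
  exact hki (mul_left_cancel this)
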